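/- The knight 1-TEST gadget — an input wire column attached to a path of three additional knights all with budget 2 — can be reduced to a single piece if the input signal is (1,0), and cannot be reduced to a single piece if the input signal is (0,0). -/

import Mathlib

/-- A configuration assigns to each square an optional budget (`none` = empty). -/
abbrev Config (V : Type) := V → Option ℕ

/-- Apply capture move `(x, y)`: the piece on `x` captures the piece on `y`,
moving to `y` with budget decreased by one. -/
def applyMove {V : Type} [DecidableEq V] (c : Config V) (m : V × V) : Config V :=
  fun z =>
    if z = m.2 then (c m.1).map (· - 1)
    else if z = m.1 then none
    else c z

/-- A move is valid if the squares are adjacent, the source piece has positive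
budget, and the target square is occupied. -/
def ValidMove {V : Type} (adj : V → V → Prop) (c : Config V) (m : V × V) : Prop :=
  adj m.1 m.2 ∧ (∃ b, c m.1 = some (b + 1)) ∧ (c m.2).isSome

def applySeq {V : Type} [DecidableEq V] (c : Config V) : List (V × V) → Config V
  | [] => c
  | m :: s => applySeq (applyMove c m) s

def ValidSeq {V : Type} [DecidableEq V] (adj : V → V → Prop) (c : Config V) :
    List (V × V) → Prop
  | [] => True
  | m :: s => ValidMove adj c m ∧ ValidSeq adj (applyMove c m) s

/-- `ConfigLE c c'`: same pieces on the same squares, with each budget in `c'`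
at least the corresponding budget in `c`. -/
def ConfigLE {V : Type} (c c' : Config V) : Prop :=
  ∀ v, ((c v).isSome ↔ (c' v).isSome) ∧
    ∀ b b', c v = some b → c' v = some b' → b ≤ b'

/-- A clearing sequence: valid and exactly one piece remains. -/
def Clears {V : Type} [DecidableEq V] (adj : V → V → Prop) (c : Config V)
    (s : List (V × V)) : Prop :=
  ValidSeq adj c s ∧ ∃! v, (applySeq c s v).isSome

/-- `f` is the final square of sequence `s` applied to `c`. -/
def FinalSquare {V : Type} [DecidableEq V] (c : Config V) (s : List (V × V)) (f : V) : Prop :=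
  (applySeq c s f).isSome ∧ ∀ v, (applySeq c s v).isSome → v = f

/-- A virtual 0-piece: occupied initially, and never moves during `s`. -/
def Virtual0 {V : Type} (c : Config V) (s : List (V × V)) (v : V) : Prop :=
  (c v).isSome ∧ ∀ m ∈ s, m.1 ≠ v

/-- A virtual 2-piece: occupied initially, and moves at some point during `s`. -/
def Virtual2 {V : Type} (c : Config V) (s : List (V × V)) (v : V) : Prop :=
  (c v).isSome ∧ ∃ m ∈ s, m.1 = v

/-- The capture graph of a configuration: vertices are squares, with an edge
between two occupied squares whose pieces can capture each other. -/
def captureGraph {V : Type} (adj : V → V → Prop) (hs : Symmetric adj) (c : Config V) :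
    SimpleGraph V where
  Adj x y := adj x y ∧ x ≠ y ∧ (c x).isSome ∧ (c y).isSome
  symm := by
    constructor
    intro x y h
    exact ⟨hs h.1, h.2.1.symm, h.2.2.2, h.2.2.1⟩
  loopless := by
    constructor
    intro x h
    exact h.2.1 rfl

/-! ## The knight 1-TEST gadget
Vertices `0 = A, 1 = B, 2 = C, 3 = D, 4 = E, 5 = F, 6 = G` with edges
`A–C, B–C, B–D, C–E, E–F, F–G`. -/

def testAdjList : List (Fin 7 × Fin 7) := [(0, 2), (1, 2), (1, 3), (2, 4), (4, 5), (5, 6)]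

def testAdj (a b : Fin 7) : Prop := (a, b) ∈ testAdjList ∨ (b, a) ∈ testAdjList

/-- The 1-TEST gadget with input signal `(x, 0)`: the outer input knight `A` is
present (budget 2) iff `x`, the inner input knight `B` has budget 0, and the
knights `C, D, E, F, G` all have budget 2. -/
def testConfig (x : Bool) : Config (Fin 7) := fun v =>
  if v = 0 then (if x then some 2 else none)
  else if v = 1 then some 0
  else some 2

instance (a b : Fin 7) : Decidable (testAdj a b) := by
  unfold testAdj; infer_instance

instance instPosBudget (o : Option ℕ) : Decidable (∃ b, o = some (b + 1)) :=
  match o with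
  | none => isFalse (by simp)
  | some 0 => isFalse (by simp)
  | some (b + 1) => isTrue ⟨b, rfl⟩

instance (c : Config (Fin 7)) (m : Fin 7 × Fin 7) : Decidable (ValidMove testAdj c m) := by
  unfold ValidMove; infer_instance

instance instVS : ∀ (c : Config (Fin 7)) (s : List (Fin 7 × Fin 7)),
    Decidable (ValidSeq testAdj c s)
  | _, [] => isTrue trivial
  | c, m :: s => @instDecidableAnd _ _ _ (instVS (applyMove c m) s)

def allMoves : List (Fin 7 × Fin 7) := testAdjList ++ testAdjList.map Prod.swap

def validB (c : Config (Fin 7)) (m : Fin 7 × Fin 7) : Bool :=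
  decide (testAdj m.1 m.2) && decide (∃ b, c m.1 = some (b + 1)) && (c m.2).isSome

def occ (c : Config (Fin 7)) : Finset (Fin 7) :=
  Finset.univ.filter (fun v => (c v).isSome)

def clearableB : ℕ → Config (Fin 7) → Bool
  | 0, c => (occ c).card == 1
  | n + 1, c => ((occ c).card == 1) ||
      allMoves.any (fun m => validB c m && clearableB n (applyMove c m))

lemma adj_ne : ∀ a b : Fin 7, testAdj a b → a ≠ b := by decide

lemma mem_occ {c : Config (Fin 7)} {v : Fin 7} : v ∈ occ c ↔ (c v).isSome := by
  simp [occ]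

lemma occ_applyMove {c : Config (Fin 7)} {m : Fin 7 × Fin 7}
    (h : ValidMove testAdj c m) : occ (applyMove c m) = (occ c).erase m.1 := by
  obtain ⟨hadj, ⟨b, hb⟩, hsome⟩ := h
  have hne := adj_ne _ _ hadj
  ext v
  rw [Finset.mem_erase, mem_occ, mem_occ]
  unfold applyMove
  by_cases h2 : v = m.2
  · subst h2
    simp [hb, hne.symm, hsome, Ne.symm hne]
  · by_cases h1 : v = m.1
    · subst h1; simp [h2]
    · simp [h1, h2]

lemma occ_card : ∀ (s : List (Fin 7 × Fin 7)) (c : Config (Fin 7)),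
    ValidSeq testAdj c s → (occ (applySeq c s)).card + s.length = (occ c).card
  | [], c, _ => by simp [applySeq]
  | m :: s, c, h => by
    obtain ⟨hm, hs⟩ := h
    have hmem : m.1 ∈ occ c := mem_occ.mpr (by rcases hm.2.1 with ⟨b, hb⟩; simp [hb])
    have ih := occ_card s (applyMove c m) hs
    have hcard : ((occ c).erase m.1).card = (occ c).card - 1 :=
      Finset.card_erase_of_mem hmem
    have hpos : 0 < (occ c).card := Finset.card_pos.mpr ⟨m.1, hmem⟩
    rw [occ_applyMove hm, hcard] at ih
    simp only [applySeq, List.length_cons]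
    omega

lemma uniq_card {c : Config (Fin 7)} (h : ∃! v, (c v).isSome) : (occ c).card = 1 := by
  obtain ⟨v, hv, hu⟩ := h
  have : occ c = {v} := by
    ext u
    rw [mem_occ, Finset.mem_singleton]
    exact ⟨fun h => hu u h, fun h => h ▸ hv⟩
  rw [this, Finset.card_singleton]

lemma clears_imp : ∀ (s : List (Fin 7 × Fin 7)) (c : Config (Fin 7)),
    Clears testAdj c s → clearableB s.length c = true
  | [], c, h => by
    simp only [List.length_nil, clearableB, beq_iff_eq]
    exact uniq_card h.2
  | m :: s, c, h => by
    obtain ⟨⟨hm, hs⟩, hu⟩ := h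
    have ih : clearableB s.length (applyMove c m) = true :=
      clears_imp s (applyMove c m) ⟨hs, hu⟩
    simp only [List.length_cons, clearableB, Bool.or_eq_true, List.any_eq_true]
    right
    refine ⟨m, ?_, ?_⟩
    · rcases hm.1 with hmem | hmem
      · exact List.mem_append_left _ hmem
      · refine List.mem_append_right _ ?_
        simpa using List.mem_map_of_mem (f := Prod.swap) hmem
    · rw [Bool.and_eq_true, ih]
      refine ⟨?_, rfl⟩
      unfold validB
      rw [Bool.and_eq_true, Bool.and_eq_true, decide_eq_true_iff, decide_eq_true_iff]
      exact ⟨⟨hm.1, hm.2.1⟩, hm.2.2⟩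

/-- **The 1-TEST gadget.** It can be reduced to a single piece if the input
signal is `(1,0)`, and cannot be reduced to a single piece if the input signal
is `(0,0)`. -/
theorem knight_one_test :
    (∃ s : List (Fin 7 × Fin 7), Clears testAdj (testConfig true) s) ∧
    ¬ ∃ s : List (Fin 7 × Fin 7), Clears testAdj (testConfig false) s := by
  constructor
  · refine ⟨[(3, 1), (1, 2), (0, 2), (2, 4), (6, 5), (5, 4)], ?_, 4, ?_, ?_⟩
    · decide
    · decide
    · decide
  · rintro ⟨s, hc⟩
    have hlen : (occ (applySeq (testConfig false) s)).card + s.length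
        = (occ (testConfig false)).card := occ_card s _ hc.1
    have hend : (occ (applySeq (testConfig false) s)).card = 1 := uniq_card hc.2
    have hstart : (occ (testConfig false)).card = 6 := by decide
    have h5 : s.length = 5 := by omega
    have := clears_imp s (testConfig false) hc
    rw [h5] at this
    have hfalse : clearableB 5 (testConfig false) = false := by decide
    rw [hfalse] at this
    exact Bool.false_ne_true this
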